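/- Let n, r, w, j be nonnegative integers with j ≤ r, w ≤ n - r, and w, n-r positive. Then [C(w, r-j)/C(n-r, r-j)] · [C(n, w+r)/C(n-r, w)] ≤ (w/(n-r))^{r-j} · ((n-r)/w)^r = (w/(n-r))^{-j}, i.e., the product is at most ((n-r)/w)^j. -/

import Mathlib

private lemma descL1 (w m : ℕ) (h : w ≤ m) :
    ∀ k, w.descFactorial k * m ^ k ≤ m.descFactorial k * w ^ k := by
  intro k
  induction k with
  | zero => simp
  | succ k ih =>
    rw [Nat.descFactorial_succ, Nat.descFactorial_succ, pow_succ, pow_succ]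
    have hB : (w - k) * m ≤ (m - k) * w := by
      rw [Nat.sub_mul, Nat.sub_mul, mul_comm w m]
      exact Nat.sub_le_sub_left (Nat.mul_le_mul_left k h) _
    calc (w - k) * w.descFactorial k * (m ^ k * m)
        = ((w - k) * m) * (w.descFactorial k * m ^ k) := by ring
      _ ≤ ((m - k) * w) * (m.descFactorial k * w ^ k) := Nat.mul_le_mul hB ih
      _ = (m - k) * m.descFactorial k * (w ^ k * w) := by ring

private lemma descL2 (w m : ℕ) (h : w ≤ m) :
    ∀ r, (m + r).descFactorial r * w ^ r ≤ (w + r).descFactorial r * m ^ r := by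
  intro r
  induction r with
  | zero => simp
  | succ r ih =>
    have e1 : m + (r + 1) = (m + r) + 1 := by ring
    have e2 : w + (r + 1) = (w + r) + 1 := by ring
    rw [e1, e2, Nat.succ_descFactorial_succ, Nat.succ_descFactorial_succ, pow_succ, pow_succ]
    have hA : (m + r + 1) * w ≤ (w + r + 1) * m := by
      have h1 : r * w ≤ r * m := Nat.mul_le_mul_left r h
      nlinarith
    calc (m + r + 1) * (m + r).descFactorial r * (w ^ r * w)
        = ((m + r + 1) * w) * ((m + r).descFactorial r * w ^ r) := by ring
      _ ≤ ((w + r + 1) * m) * ((w + r).descFactorial r * m ^ r) := Nat.mul_le_mul hA ih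
      _ = (w + r + 1) * (w + r).descFactorial r * (m ^ r * m) := by ring

theorem stmt7 (n r w j : ℕ) (hj : j ≤ r) (hrn : r ≤ n) (hw : w ≤ n - r)
    (hwpos : 0 < w) (hnr : 0 < n - r) (hwr : w + r ≤ n) :
    ((w.choose (r - j) : ℝ) / ((n - r).choose (r - j))) *
      ((n.choose (w + r) : ℝ) / ((n - r).choose w))
      ≤ (((n - r : ℕ) : ℝ) / w) ^ j := by
  set m : ℕ := n - r with hm
  set k : ℕ := r - j with hk
  have hrkj : r = k + j := by omega
  have hnm : n = m + r := by omega
  have hmpos : (0:ℝ) < m := by exact_mod_cast hnr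
  have hwposR : (0:ℝ) < w := by exact_mod_cast hwpos
  -- first factor bound
  have h1 : (w.choose k : ℝ) / (m.choose k : ℝ) ≤ ((w:ℝ) / m) ^ k := by
    by_cases hkm : k ≤ m
    · have hc : (0:ℝ) < m.choose k := by exact_mod_cast Nat.choose_pos hkm
      rw [div_pow, div_le_div_iff₀ hc (by positivity)]
      have hN : k.factorial * w.choose k * m ^ k ≤ k.factorial * m.choose k * w ^ k := by
        have := descL1 w m hw k
        rwa [Nat.descFactorial_eq_factorial_mul_choose,
          Nat.descFactorial_eq_factorial_mul_choose] at this
      have hNR : (k.factorial : ℝ) * w.choose k * (m:ℝ) ^ k ≤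
          (k.factorial : ℝ) * m.choose k * (w:ℝ) ^ k := by exact_mod_cast hN
      have hfpos : (0:ℝ) < k.factorial := by exact_mod_cast k.factorial_pos
      nlinarith
    · have hwk : w.choose k = 0 := Nat.choose_eq_zero_of_lt (by omega)
      rw [hwk]
      simp
      positivity
  -- second factor bound
  have h2 : (n.choose (w + r) : ℝ) / (m.choose w : ℝ) ≤ ((m:ℝ) / w) ^ r := by
    have hcmw : (0:ℝ) < m.choose w := by exact_mod_cast Nat.choose_pos hw
    have hcwr : (0:ℝ) < (w + r).choose r := by
      exact_mod_cast Nat.choose_pos (Nat.le_add_left r w)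
    rw [div_pow, div_le_div_iff₀ hcmw (by positivity)]
    -- identity: C(n, w+r) * C(w+r, r) = C(n, r) * C(m, w)
    have hI : n.choose (w + r) * (w + r).choose r = n.choose r * m.choose w := by
      have := Nat.choose_mul (n := n) (Nat.le_add_left r w)
      simpa [hm] using this
    have hIR : (n.choose (w + r) : ℝ) * ((w + r).choose r : ℝ) =
        (n.choose r : ℝ) * (m.choose w : ℝ) := by exact_mod_cast hI
    have hL2 : r.factorial * n.choose r * w ^ r ≤ r.factorial * (w + r).choose r * m ^ r := by
      have := descL2 w m hw r
      rwa [Nat.descFactorial_eq_factorial_mul_choose,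
        Nat.descFactorial_eq_factorial_mul_choose, ← hnm] at this
    have hL2R : (r.factorial : ℝ) * n.choose r * (w:ℝ) ^ r ≤
        (r.factorial : ℝ) * (w + r).choose r * (m:ℝ) ^ r := by exact_mod_cast hL2
    have hfpos : (0:ℝ) < r.factorial := by exact_mod_cast r.factorial_pos
    have hcn : (0:ℝ) ≤ (n.choose (w+r) : ℝ) := by positivity
    -- goal: C(n,w+r) * w^r ≤ m^r * C(m,w)
    rw [← mul_le_mul_iff_left₀ hcwr]
    calc (n.choose (w + r) : ℝ) * (w:ℝ) ^ r * ((w + r).choose r : ℝ)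
        = ((n.choose (w + r) : ℝ) * ((w + r).choose r : ℝ)) * (w:ℝ) ^ r := by ring
      _ = (n.choose r : ℝ) * (m.choose w : ℝ) * (w:ℝ) ^ r := by rw [hIR]
      _ ≤ ((w + r).choose r : ℝ) * (m:ℝ) ^ r * (m.choose w : ℝ) := by nlinarith
      _ = (m:ℝ) ^ r * (m.choose w : ℝ) * ((w + r).choose r : ℝ) := by ring
  have key : ((w:ℝ) / m) ^ k * ((m:ℝ) / w) ^ r = ((m:ℝ) / w) ^ j := by
    have hone : (w:ℝ) / m * ((m:ℝ) / w) = 1 := by field_simp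
    calc ((w:ℝ) / m) ^ k * ((m:ℝ) / w) ^ r
        = ((w:ℝ) / m * ((m:ℝ) / w)) ^ k * ((m:ℝ) / w) ^ j := by
          rw [hrkj, pow_add, mul_pow]; ring
      _ = ((m:ℝ) / w) ^ j := by rw [hone]; simp
  calc ((w.choose k : ℝ) / (m.choose k : ℝ)) * ((n.choose (w + r) : ℝ) / (m.choose w : ℝ))
      ≤ ((w:ℝ) / m) ^ k * ((m:ℝ) / w) ^ r := by
        apply mul_le_mul h1 h2 (by positivity) (by positivity)
    _ = ((m:ℝ) / w) ^ j := key
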